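/- Under the assumptions that ‖Ψ_z‖_{L^∞(𝔻)} ≤ C₁ and ‖ω̃‖_{L^∞(𝔻)} ≤ C₂, the function b̃(y) = (i/2π) ∫_𝔻 [1/(conj(y)−conj(s)) − 1/(conj(y)−1/s)]·ω̃(s)·|Ψ_z(s)|² ds satisfies the log-Lipschitz bound |b̃(z₁) − b̃(z₂)| ≤ C(C₁,C₂)·φ(|z₁ − z₂|) for all z₁, z₂ in the closed unit disc, where φ(x) = x·max(−ln x, 1). -/

import Mathlib

open MeasureTheory

noncomputable def phi (x : ℝ) : ℝ := x * max (-Real.log x) 1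

/-- The Biot–Savart-type velocity field on the unit disc, in conformal coordinates. -/
noncomputable def btil (Psi' : ℂ → ℂ) (w : ℂ → ℝ) (y : ℂ) : ℂ :=
  (Complex.I / (2 * Real.pi)) * ∫ s in {z : ℂ | ‖z‖ < 1},
    (1 / (starRingEnd ℂ y - starRingEnd ℂ s) - 1 / (starRingEnd ℂ y - 1 / s))
      * (w s : ℂ) * ((‖Psi' s‖)^2 : ℝ)

open MeasureTheory Measure Metric Set ENNReal

lemma lintegral_norm_complex (g : ℝ → ℝ≥0∞) (hg : Measurable g) :
    ∫⁻ x : ℂ, g ‖x‖ = ((2 : ℝ≥0∞) * NNReal.pi) * ∫⁻ y in Ioi (0:ℝ), ENNReal.ofReal y * g y := by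
  have h0 : (volume : Measure ℂ) {0} = 0 := measure_singleton 0
  have hm : MeasurableSet ({0}ᶜ : Set ℂ) := (measurableSet_singleton 0).compl
  have step1 : ∫⁻ x : ({0}ᶜ : Set ℂ), g ‖x.1‖ ∂((volume : Measure ℂ).comap (↑)) = ∫⁻ x : ℂ, g ‖x‖ :=
    (lintegral_subtype_comap hm (fun x : ℂ => g ‖x‖)).trans
      (by rw [MeasureTheory.restrict_compl_singleton])
  rw [← step1]
  have hmp := (volume : Measure ℂ).measurePreserving_homeomorphUnitSphereProd
  have hF : Measurable (fun p : sphere (0:ℂ) 1 × Ioi (0:ℝ) => g p.2.1) :=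
    (hg.comp measurable_subtype_coe).comp measurable_snd
  have step2 : ∫⁻ x : ({0}ᶜ : Set ℂ), g ‖x.1‖ ∂((volume : Measure ℂ).comap (↑))
      = ∫⁻ p : sphere (0:ℂ) 1 × Ioi (0:ℝ), g p.2.1
          ∂((volume : Measure ℂ).toSphere.prod (Measure.volumeIoiPow (Module.finrank ℝ ℂ - 1))) := by
    rw [← hmp.lintegral_comp hF]
    simp
  rw [step2]
  have step3 : ∫⁻ p : sphere (0:ℂ) 1 × Ioi (0:ℝ), g p.2.1
      ∂((volume : Measure ℂ).toSphere.prod (Measure.volumeIoiPow (Module.finrank ℝ ℂ - 1)))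
      = (volume : Measure ℂ).toSphere univ *
        ∫⁻ y : Ioi (0:ℝ), g y.1 ∂(Measure.volumeIoiPow (Module.finrank ℝ ℂ - 1)) := by
    rw [lintegral_prod _ hF.aemeasurable]
    simp [lintegral_const, mul_comm]
  rw [step3]
  have hsph : (volume : Measure ℂ).toSphere univ = (2 : ℝ≥0∞) * NNReal.pi := by
    rw [Measure.toSphere_apply_univ, Complex.finrank_real_complex, Complex.volume_ball]
    simp
  have hdim : Module.finrank ℝ ℂ - 1 = 1 := by rw [Complex.finrank_real_complex]
  rw [hsph, hdim]
  congr 1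
  rw [Measure.volumeIoiPow,
    lintegral_withDensity_eq_lintegral_mul _ (by fun_prop)
      (show Measurable fun y : Ioi (0:ℝ) => g y.1 from hg.comp measurable_subtype_coe)]
  exact (lintegral_subtype_comap measurableSet_Ioi
    (fun y : ℝ => ENNReal.ofReal (y ^ 1) * g y)).trans (by simp [pow_one])

lemma lintegral_fun_dist (c : ℂ) (G : ℝ → ℝ≥0∞) (hG : Measurable G) :
    ∫⁻ x : ℂ, G ‖x - c‖ = ((2 : ℝ≥0∞) * NNReal.pi) * ∫⁻ y in Ioi (0:ℝ), ENNReal.ofReal y * G y := by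
  rw [← lintegral_norm_complex G hG]
  exact lintegral_sub_right_eq_self (fun x : ℂ => G ‖x‖) c

lemma two_pi_ennreal : ((2 : ℝ≥0∞) * NNReal.pi) = ENNReal.ofReal (2 * Real.pi) := by
  rw [ENNReal.ofReal_mul (by norm_num)]
  congr 1
  · simp
  · rw [← NNReal.coe_real_pi, ENNReal.ofReal_coe_nnreal]

lemma P1 (c : ℂ) (r : ℝ) (hr : 0 ≤ r) :
    ∫⁻ s in Metric.ball c r, ENNReal.ofReal ‖s - c‖⁻¹ ∂volume
      = ENNReal.ofReal (2 * Real.pi * r) := by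
  set G : ℝ → ℝ≥0∞ := fun y => if y < r then ENNReal.ofReal y⁻¹ else 0 with hGdef
  have hG : Measurable G := by
    apply Measurable.ite (measurableSet_Iio) <;> fun_prop
  have h1 : ∫⁻ s in Metric.ball c r, ENNReal.ofReal ‖s - c‖⁻¹ ∂volume
      = ∫⁻ s : ℂ, G ‖s - c‖ := by
    rw [← lintegral_indicator measurableSet_ball]
    refine lintegral_congr fun s => ?_
    by_cases h : s ∈ Metric.ball c r
    · rw [Set.indicator_of_mem h]
      have h' : ‖s - c‖ < r := mem_ball_iff_norm.mp h
      simp only [hGdef, if_pos h']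
    · rw [Set.indicator_of_notMem h]
      have h' : ¬ ‖s - c‖ < r := fun hc => h (mem_ball_iff_norm.mpr hc)
      simp only [hGdef, if_neg h']
  rw [h1, lintegral_fun_dist c G hG]
  have h2 : ∫⁻ y in Ioi (0:ℝ), ENNReal.ofReal y * G y = ENNReal.ofReal r := by
    have hcong : ∀ y ∈ Ioi (0:ℝ), ENNReal.ofReal y * G y
        = Set.indicator (Iio r) (fun _ => (1:ℝ≥0∞)) y := by
      intro y hy
      rcases lt_or_ge y r with h | h
      · rw [Set.indicator_of_mem (show y ∈ Iio r from h)]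
        simp only [hGdef, if_pos h]
        rw [← ENNReal.ofReal_mul (le_of_lt hy), mul_inv_cancel₀ (ne_of_gt hy), ENNReal.ofReal_one]
      · rw [Set.indicator_of_notMem (show y ∉ Iio r from not_lt.mpr h)]
        simp [hGdef, not_lt.mpr h]
    rw [setLIntegral_congr_fun measurableSet_Ioi hcong,
      lintegral_indicator measurableSet_Iio, Measure.restrict_restrict measurableSet_Iio,
      lintegral_one, Measure.restrict_apply_univ, Set.Iio_inter_Ioi, Real.volume_Ioo]
    simp
  rw [h2, two_pi_ennreal, ← ENNReal.ofReal_mul (by positivity)]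

lemma P2 (c : ℂ) (r R : ℝ) (hr : 0 < r) (hrR : r ≤ R) :
    ∫⁻ s in Metric.ball c R \ Metric.ball c r, ENNReal.ofReal (‖s - c‖ ^ 2)⁻¹ ∂volume
      = ENNReal.ofReal (2 * Real.pi * (Real.log R - Real.log r)) := by
  set G : ℝ → ℝ≥0∞ := fun y => if y < R ∧ ¬ y < r then ENNReal.ofReal (y ^ 2)⁻¹ else 0 with hGdef
  have hG : Measurable G := by
    apply Measurable.ite ((measurableSet_Iio).inter (measurableSet_Iio.compl)) <;> fun_prop
  have hms : MeasurableSet (Metric.ball c R \ Metric.ball c r) :=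
    measurableSet_ball.diff measurableSet_ball
  have h1 : ∫⁻ s in Metric.ball c R \ Metric.ball c r, ENNReal.ofReal (‖s - c‖ ^ 2)⁻¹ ∂volume
      = ∫⁻ s : ℂ, G ‖s - c‖ := by
    rw [← lintegral_indicator hms]
    refine lintegral_congr fun s => ?_
    by_cases h : s ∈ Metric.ball c R \ Metric.ball c r
    · rw [Set.indicator_of_mem h]
      have h' : ‖s - c‖ < R ∧ ¬ ‖s - c‖ < r :=
        ⟨mem_ball_iff_norm.mp h.1, fun hc => h.2 (mem_ball_iff_norm.mpr hc)⟩
      simp only [hGdef, if_pos h']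
    · rw [Set.indicator_of_notMem h]
      have h' : ¬ (‖s - c‖ < R ∧ ¬ ‖s - c‖ < r) := by
        intro hc
        exact h ⟨mem_ball_iff_norm.mpr hc.1, fun hb => hc.2 (mem_ball_iff_norm.mp hb)⟩
      simp only [hGdef, if_neg h']
  rw [h1, lintegral_fun_dist c G hG]
  have h2 : ∫⁻ y in Ioi (0:ℝ), ENNReal.ofReal y * G y
      = ENNReal.ofReal (Real.log R - Real.log r) := by
    have hcong : ∀ y ∈ Ioi (0:ℝ), ENNReal.ofReal y * G y
        = Set.indicator (Ico r R) (fun y => ENNReal.ofReal y⁻¹) y := by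
      intro y hy
      by_cases h : y ∈ Ico r R
      · rw [Set.indicator_of_mem h]
        have h' : y < R ∧ ¬ y < r := ⟨h.2, not_lt.mpr h.1⟩
        simp only [hGdef, if_pos h']
        rw [← ENNReal.ofReal_mul (le_of_lt hy)]
        congr 1
        rw [sq, mul_inv, ← mul_assoc, mul_inv_cancel₀ (ne_of_gt hy), one_mul]
      · rw [Set.indicator_of_notMem h]
        have h' : ¬ (y < R ∧ ¬ y < r) := by
          intro hc
          exact h ⟨not_lt.mp hc.2, hc.1⟩
        simp only [hGdef, if_neg h']
        simp
    rw [setLIntegral_congr_fun measurableSet_Ioi hcong,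
      lintegral_indicator measurableSet_Ico, Measure.restrict_restrict measurableSet_Ico]
    have hset : Ico r R ∩ Ioi (0:ℝ) = Ico r R := by
      apply Set.inter_eq_left.mpr
      intro y hy
      exact lt_of_lt_of_le hr hy.1
    rw [hset]
    have hIoo : ∫⁻ y in Ico r R, ENNReal.ofReal y⁻¹ ∂volume
        = ∫⁻ y in Ioo r R, ENNReal.ofReal y⁻¹ ∂volume :=
      setLIntegral_congr (Filter.EventuallyEq.symm Ioo_ae_eq_Ico)
    rw [hIoo, ← ofReal_integral_eq_lintegral_ofReal]
    · congr 1
      have : ∫ y in Ioo r R, y⁻¹ ∂volume = ∫ y in Set.Ioc r R, y⁻¹ ∂volume :=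
        setIntegral_congr_set Ioo_ae_eq_Ioc
      rw [this, ← intervalIntegral.integral_of_le hrR,
        integral_inv (by rw [Set.uIcc_of_le hrR]; intro h; exact absurd h.1 (not_le.mpr hr)),
        Real.log_div (ne_of_gt (lt_of_lt_of_le hr hrR)) (ne_of_gt hr)]
    · have : IntervalIntegrable (fun y => y⁻¹) volume r R := by
        apply intervalIntegral.intervalIntegrable_inv
        · intro x hx
          rw [Set.uIcc_of_le hrR] at hx
          exact ne_of_gt (lt_of_lt_of_le hr hx.1)
        · exact continuousOn_id
      have := (intervalIntegrable_iff_integrableOn_Ioc_of_le hrR).mp this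
      exact this.mono_set Set.Ioo_subset_Ioc_self
    · filter_upwards [self_mem_ae_restrict measurableSet_Ioo] with y hy
      exact inv_nonneg.mpr (hr.trans hy.1).le
  rw [h2, two_pi_ennreal, ← ENNReal.ofReal_mul (by positivity)]

lemma piece_ball (a b : ℂ) (ρ κ : ℝ) (hκ : 0 ≤ κ)
    (hpt : ∀ s ∈ Metric.ball a ρ, (‖s - a‖ * ‖s - b‖)⁻¹ ≤ κ * ‖s - a‖⁻¹) :
    ∫⁻ s in Metric.ball a ρ, ENNReal.ofReal ((‖s - a‖ * ‖s - b‖)⁻¹) ∂volume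
      ≤ ENNReal.ofReal (κ * (2 * Real.pi * ρ)) := by
  calc ∫⁻ s in Metric.ball a ρ, ENNReal.ofReal ((‖s - a‖ * ‖s - b‖)⁻¹) ∂volume
      ≤ ∫⁻ s in Metric.ball a ρ, ENNReal.ofReal κ * ENNReal.ofReal (‖s - a‖⁻¹) ∂volume := by
        refine setLIntegral_mono' measurableSet_ball fun s hs => ?_
        rw [← ENNReal.ofReal_mul hκ]
        exact ENNReal.ofReal_le_ofReal (hpt s hs)
    _ = ENNReal.ofReal κ * ∫⁻ s in Metric.ball a ρ, ENNReal.ofReal (‖s - a‖⁻¹) ∂volume :=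
        lintegral_const_mul' _ _ ENNReal.ofReal_ne_top
    _ ≤ ENNReal.ofReal (κ * (2 * Real.pi * ρ)) := by
        rcases le_or_gt 0 ρ with hρ | hρ
        · rw [P1 a ρ hρ, ← ENNReal.ofReal_mul hκ]
        · simp [Metric.ball_eq_empty.mpr hρ.le]

lemma keyJ (a b : ℂ) (ha : ‖a‖ ≤ 1) (hb : ‖b‖ ≤ 1) (hab : a ≠ b) :
    ∫⁻ s in {z : ℂ | ‖z‖ < 1}, ENNReal.ofReal ((‖s - a‖ * ‖s - b‖)⁻¹) ∂volume
      ≤ ENNReal.ofReal (60 * max (-Real.log ‖a - b‖) 1) := by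
  set d : ℝ := ‖a - b‖ with hddef
  have hd : 0 < d := by
    rw [hddef]; simpa [sub_eq_zero] using hab
  have hd2 : d ≤ 2 := by
    calc d ≤ ‖a‖ + ‖b‖ := norm_sub_le a b
    _ ≤ 1 + 1 := by
        exact add_le_add ha hb
    _ = 2 := by norm_num
  set M : ℝ := max (-Real.log d) 1 with hMdef
  have hM1 : 1 ≤ M := le_max_right _ _
  set R : ℝ := max 3 (2 * d) with hRdef
  set g : ℂ → ℝ≥0∞ := fun s => ENNReal.ofReal ((‖s - a‖ * ‖s - b‖)⁻¹) with hgdef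
  -- subset of union
  have hsub : {z : ℂ | ‖z‖ < 1} ⊆
      (Metric.ball a (d/2) ∪ Metric.ball b (d/2)) ∪
      ((Metric.ball a (2*d) \ Metric.ball b (d/2)) ∪ (Metric.ball a R \ Metric.ball a (2*d))) := by
    intro s hs
    have hs1 : ‖s‖ < 1 := hs
    by_cases h1 : s ∈ Metric.ball a (d/2)
    · exact Or.inl (Or.inl h1)
    by_cases h2 : s ∈ Metric.ball b (d/2)
    · exact Or.inl (Or.inr h2)
    by_cases h3 : s ∈ Metric.ball a (2*d)
    · exact Or.inr (Or.inl ⟨h3, h2⟩)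
    · refine Or.inr (Or.inr ⟨?_, h3⟩)
      have : dist s a ≤ ‖s‖ + ‖a‖ := by
        rw [dist_eq_norm]
        exact (norm_sub_le s a).trans (le_refl _)
      refine Metric.mem_ball.mpr (lt_of_le_of_lt this ?_)
      have : ‖a‖ ≤ 1 := ha
      calc ‖s‖ + ‖a‖ < 1 + 1 := by linarith
      _ ≤ 3 := by norm_num
      _ ≤ R := le_max_left _ _
  have hmono := lintegral_mono_set (μ := volume) (f := g) hsub
  have hU1 := lintegral_union_le (μ := volume) g
    (Metric.ball a (d/2) ∪ Metric.ball b (d/2))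
    ((Metric.ball a (2*d) \ Metric.ball b (d/2)) ∪ (Metric.ball a R \ Metric.ball a (2*d)))
  have hU2 := lintegral_union_le (μ := volume) g (Metric.ball a (d/2)) (Metric.ball b (d/2))
  have hU3 := lintegral_union_le (μ := volume) g
    (Metric.ball a (2*d) \ Metric.ball b (d/2)) (Metric.ball a R \ Metric.ball a (2*d))
  -- piece 1
  have hp1 : ∫⁻ s in Metric.ball a (d/2), g s ∂volume ≤ ENNReal.ofReal (2 * Real.pi) := by
    have := piece_ball a b (d/2) (2/d) (by positivity) ?_
    · refine this.trans (le_of_eq ?_)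
      congr 1
      field_simp
    · intro s hs
      have hsb : d/2 ≤ ‖s - b‖ := by
        have h1 : ‖s - a‖ < d/2 := mem_ball_iff_norm.mp hs
        have h2 : d ≤ ‖s - a‖ + ‖s - b‖ := by
          calc d = ‖a - b‖ := hddef
          _ = ‖(a - s) + (s - b)‖ := by ring_nf
          _ ≤ ‖a - s‖ + ‖s - b‖ := norm_add_le _ _
          _ = ‖s - a‖ + ‖s - b‖ := by rw [norm_sub_rev]
        linarith
      rw [mul_inv, mul_comm ((2:ℝ)/d)]
      have hinv : ‖s - b‖⁻¹ ≤ 2/d := by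
        rw [(by field_simp : (2:ℝ)/d = (d/2)⁻¹)]
        exact inv_anti₀ (by positivity) hsb
      exact mul_le_mul_of_nonneg_left hinv (by positivity)
  -- piece 2
  have hp2 : ∫⁻ s in Metric.ball b (d/2), g s ∂volume ≤ ENNReal.ofReal (2 * Real.pi) := by
    have hgg : ∀ s : ℂ, g s = ENNReal.ofReal ((‖s - b‖ * ‖s - a‖)⁻¹) := by
      intro s; rw [hgdef]; simp only [mul_comm]
    have heq : ∫⁻ s in Metric.ball b (d/2), g s ∂volume
        = ∫⁻ s in Metric.ball b (d/2), ENNReal.ofReal ((‖s - b‖ * ‖s - a‖)⁻¹) ∂volume :=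
      lintegral_congr fun s => hgg s
    rw [heq]
    have := piece_ball b a (d/2) (2/d) (by positivity) ?_
    · refine this.trans (le_of_eq ?_)
      congr 1
      field_simp
    · intro s hs
      have hsb : d/2 ≤ ‖s - a‖ := by
        have h1 : ‖s - b‖ < d/2 := mem_ball_iff_norm.mp hs
        have h2 : d ≤ ‖s - a‖ + ‖s - b‖ := by
          calc d = ‖a - b‖ := hddef
          _ = ‖(a - s) + (s - b)‖ := by ring_nf
          _ ≤ ‖a - s‖ + ‖s - b‖ := norm_add_le _ _
          _ = ‖s - a‖ + ‖s - b‖ := by rw [norm_sub_rev]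
        linarith
      rw [mul_inv, mul_comm ((2:ℝ)/d)]
      have hinv : ‖s - a‖⁻¹ ≤ 2/d := by
        rw [(by field_simp : (2:ℝ)/d = (d/2)⁻¹)]
        exact inv_anti₀ (by positivity) hsb
      exact mul_le_mul_of_nonneg_left hinv (by positivity)
  -- piece 3
  have hp3 : ∫⁻ s in Metric.ball a (2*d) \ Metric.ball b (d/2), g s ∂volume
      ≤ ENNReal.ofReal (8 * Real.pi) := by
    have hms : MeasurableSet (Metric.ball a (2*d) \ Metric.ball b (d/2)) :=
      measurableSet_ball.diff measurableSet_ball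
    calc ∫⁻ s in Metric.ball a (2*d) \ Metric.ball b (d/2), g s ∂volume
        ≤ ∫⁻ s in Metric.ball a (2*d) \ Metric.ball b (d/2),
            ENNReal.ofReal (2/d) * ENNReal.ofReal (‖s - a‖⁻¹) ∂volume := by
          refine setLIntegral_mono' hms fun s hs => ?_
          have hsb : d/2 ≤ ‖s - b‖ :=
            not_lt.mp (fun hc => hs.2 (mem_ball_iff_norm.mpr hc))
          rw [hgdef, ← ENNReal.ofReal_mul (by positivity)]
          refine ENNReal.ofReal_le_ofReal ?_
          rw [mul_inv, mul_comm ((2:ℝ)/d)]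
          have hinv : ‖s - b‖⁻¹ ≤ 2/d := by
            rw [(by field_simp : (2:ℝ)/d = (d/2)⁻¹)]
            exact inv_anti₀ (by positivity) hsb
          exact mul_le_mul_of_nonneg_left hinv (by positivity)
      _ ≤ ∫⁻ s in Metric.ball a (2*d),
            ENNReal.ofReal (2/d) * ENNReal.ofReal (‖s - a‖⁻¹) ∂volume :=
          lintegral_mono_set Set.diff_subset
      _ = ENNReal.ofReal (2/d) * ∫⁻ s in Metric.ball a (2*d),
            ENNReal.ofReal (‖s - a‖⁻¹) ∂volume :=
          lintegral_const_mul' _ _ ENNReal.ofReal_ne_top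
      _ ≤ ENNReal.ofReal (8 * Real.pi) := by
          rw [P1 a (2*d) (by positivity), ← ENNReal.ofReal_mul (by positivity)]
          refine ENNReal.ofReal_le_ofReal (le_of_eq ?_)
          field_simp
          ring
  -- piece 4
  have hp4 : ∫⁻ s in Metric.ball a R \ Metric.ball a (2*d), g s ∂volume
      ≤ ENNReal.ofReal (4 * Real.pi * (Real.log R - Real.log (2*d))) := by
    have hms : MeasurableSet (Metric.ball a R \ Metric.ball a (2*d)) :=
      measurableSet_ball.diff measurableSet_ball
    calc ∫⁻ s in Metric.ball a R \ Metric.ball a (2*d), g s ∂volume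
        ≤ ∫⁻ s in Metric.ball a R \ Metric.ball a (2*d),
            ENNReal.ofReal (2:ℝ) * ENNReal.ofReal ((‖s - a‖^2)⁻¹) ∂volume := by
          refine setLIntegral_mono' hms fun s hs => ?_
          have hsa : 2*d ≤ ‖s - a‖ :=
            not_lt.mp (fun hc => hs.2 (mem_ball_iff_norm.mpr hc))
          have hsb : ‖s - a‖/2 ≤ ‖s - b‖ := by
            have h2 : ‖s - a‖ ≤ ‖s - b‖ + d := by
              have ht := dist_triangle s b a
              rw [dist_eq_norm, dist_eq_norm, dist_eq_norm] at ht
              have hba : ‖b - a‖ = d := by rw [norm_sub_rev]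
              linarith
            linarith
          rw [hgdef, ← ENNReal.ofReal_mul (by positivity)]
          refine ENNReal.ofReal_le_ofReal ?_
          have hsa0 : 0 < ‖s - a‖ := by linarith
          have hprod : ‖s - a‖^2/2 ≤ ‖s - a‖ * ‖s - b‖ := by
            calc ‖s - a‖^2/2 = ‖s - a‖ * (‖s - a‖/2) := by ring
            _ ≤ ‖s - a‖ * ‖s - b‖ := by
                exact mul_le_mul_of_nonneg_left hsb (le_of_lt hsa0)
          calc (‖s - a‖ * ‖s - b‖)⁻¹ ≤ (‖s - a‖^2/2)⁻¹ :=
                inv_anti₀ (by positivity) hprod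
          _ = 2 * (‖s - a‖^2)⁻¹ := by field_simp
      _ ≤ ∫⁻ s in Metric.ball a R \ Metric.ball a (2*d),
            ENNReal.ofReal (2:ℝ) * ENNReal.ofReal ((‖s - a‖^2)⁻¹) ∂volume := le_rfl
      _ = ENNReal.ofReal (2:ℝ) * ∫⁻ s in Metric.ball a R \ Metric.ball a (2*d),
            ENNReal.ofReal ((‖s - a‖^2)⁻¹) ∂volume :=
          lintegral_const_mul' _ _ ENNReal.ofReal_ne_top
      _ ≤ ENNReal.ofReal (4 * Real.pi * (Real.log R - Real.log (2*d))) := by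
          rw [P2 a (2*d) R (by linarith) (le_max_right _ _),
            ← ENNReal.ofReal_mul (by norm_num)]
          refine ENNReal.ofReal_le_ofReal (le_of_eq ?_)
          ring
  -- combine
  have hlog : Real.log R - Real.log (2*d) ≤ 3/2 * M := by
    rcases max_cases 3 (2*d) with ⟨hR3, hle⟩ | ⟨hR3, hlt⟩
    · rw [hRdef, hR3]
      have h2d : Real.log (2*d) = Real.log 2 + Real.log d :=
        Real.log_mul (by norm_num) (ne_of_gt hd)
      have hlogd : -Real.log d ≤ M := le_max_left _ _
      have h32 : Real.log 3 - Real.log 2 ≤ 1/2 := by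
        rw [← Real.log_div (by norm_num) (by norm_num)]
        have := Real.log_le_sub_one_of_pos (show (0:ℝ) < 3/2 by norm_num)
        linarith
      have hM2 : (1:ℝ)/2 ≤ M/2 := by linarith
      linarith
    · rw [hRdef, hR3]
      simp only [_root_.sub_self]
      linarith
  have hsum : ENNReal.ofReal (2 * Real.pi) + ENNReal.ofReal (2 * Real.pi)
      + ENNReal.ofReal (8 * Real.pi)
      + ENNReal.ofReal (4 * Real.pi * (Real.log R - Real.log (2*d)))
      ≤ ENNReal.ofReal (60 * M) := by
    have hRd : Real.log (2*d) ≤ Real.log R :=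
      Real.log_le_log (by positivity) (le_max_right _ _)
    rw [← ENNReal.ofReal_add (by positivity) (by positivity),
      ← ENNReal.ofReal_add (by positivity) (by positivity),
      ← ENNReal.ofReal_add (by positivity) (by nlinarith [Real.pi_pos])]
    refine ENNReal.ofReal_le_ofReal ?_
    nlinarith [Real.pi_pos, Real.pi_lt_d2, hM1, hlog]
  calc ∫⁻ s in {z : ℂ | ‖z‖ < 1}, g s ∂volume
      ≤ _ := hmono
    _ ≤ _ := hU1
    _ ≤ _ := add_le_add hU2 hU3
    _ ≤ ENNReal.ofReal (60 * M) := by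
        refine le_trans (add_le_add (add_le_add hp1 hp2) (add_le_add hp3 hp4)) ?_
        rw [← add_assoc]
        exact hsum

lemma reflect_ge (z s : ℂ) (hz : ‖z‖ ≤ 1) (hs : ‖s‖ < 1) (hs0 : s ≠ 0) :
    ‖z - s‖ ≤ ‖starRingEnd ℂ z - 1/s‖ := by
  have hns : ‖s‖ ≤ 1 := hs.le
  have hns0 : (0:ℝ) < ‖s‖ := norm_pos_iff.mpr hs0
  have key : ‖z - s‖ ≤ ‖s * starRingEnd ℂ z - 1‖ := by
    have hsq : ‖z - s‖^2 ≤ ‖s * starRingEnd ℂ z - 1‖^2 := by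
      rw [Complex.sq_norm, Complex.sq_norm]
      have hz2 : Complex.normSq z ≤ 1 := by
        rw [← Complex.sq_norm]
        nlinarith [norm_nonneg z]
      have hs2 : Complex.normSq s ≤ 1 := by
        rw [← Complex.sq_norm]
        nlinarith [norm_nonneg s]
      have hid : Complex.normSq (s * starRingEnd ℂ z - 1) - Complex.normSq (z - s)
          = (1 - Complex.normSq z) * (1 - Complex.normSq s) := by
        simp only [Complex.normSq_apply, Complex.sub_re, Complex.sub_im, Complex.mul_re,
          Complex.mul_im, Complex.conj_re, Complex.conj_im, Complex.one_re, Complex.one_im]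
        ring
      nlinarith [hid]
    have h0 : (0:ℝ) ≤ ‖s * starRingEnd ℂ z - 1‖ := norm_nonneg _
    nlinarith [norm_nonneg (z - s)]
  have heq : ‖starRingEnd ℂ z - 1/s‖ * ‖s‖ = ‖s * starRingEnd ℂ z - 1‖ := by
    rw [← norm_mul]
    congr 1
    field_simp
  calc ‖z - s‖ ≤ ‖s * starRingEnd ℂ z - 1‖ := key
  _ = ‖starRingEnd ℂ z - 1/s‖ * ‖s‖ := heq.symm
  _ ≤ ‖starRingEnd ℂ z - 1/s‖ * 1 := by
      exact mul_le_mul_of_nonneg_left hns (norm_nonneg _)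
  _ = ‖starRingEnd ℂ z - 1/s‖ := mul_one _

lemma conj_sub_norm (u v : ℂ) : ‖starRingEnd ℂ u - starRingEnd ℂ v‖ = ‖v - u‖ := by
  rw [← map_sub, RCLike.norm_conj, norm_sub_rev]

lemma kernel_diff_bound (z₁ z₂ s : ℂ) (h₁ : ‖z₁‖ ≤ 1) (h₂ : ‖z₂‖ ≤ 1)
    (hs : ‖s‖ < 1) (hs0 : s ≠ 0) (hs1 : s ≠ z₁) (hs2 : s ≠ z₂) :
    ‖(1 / (starRingEnd ℂ z₁ - starRingEnd ℂ s) - 1 / (starRingEnd ℂ z₁ - 1 / s))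
      - (1 / (starRingEnd ℂ z₂ - starRingEnd ℂ s) - 1 / (starRingEnd ℂ z₂ - 1 / s))‖
      ≤ 2 * ‖z₁ - z₂‖ * (‖s - z₁‖ * ‖s - z₂‖)⁻¹ := by
  set A₁ : ℂ := starRingEnd ℂ z₁ - starRingEnd ℂ s with hA₁
  set A₂ : ℂ := starRingEnd ℂ z₂ - starRingEnd ℂ s with hA₂
  set B₁ : ℂ := starRingEnd ℂ z₁ - 1/s with hB₁
  set B₂ : ℂ := starRingEnd ℂ z₂ - 1/s with hB₂
  have hnA₁ : ‖A₁‖ = ‖s - z₁‖ := conj_sub_norm z₁ s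
  have hnA₂ : ‖A₂‖ = ‖s - z₂‖ := conj_sub_norm z₂ s
  have hsz₁ : (0:ℝ) < ‖s - z₁‖ := by
    rw [norm_pos_iff, sub_ne_zero]; exact hs1
  have hsz₂ : (0:ℝ) < ‖s - z₂‖ := by
    rw [norm_pos_iff, sub_ne_zero]; exact hs2
  have hA₁0 : A₁ ≠ 0 := by rw [← norm_pos_iff, hnA₁]; exact hsz₁
  have hA₂0 : A₂ ≠ 0 := by rw [← norm_pos_iff, hnA₂]; exact hsz₂
  have hrB₁ : ‖z₁ - s‖ ≤ ‖B₁‖ := reflect_ge z₁ s h₁ hs hs0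
  have hrB₂ : ‖z₂ - s‖ ≤ ‖B₂‖ := reflect_ge z₂ s h₂ hs hs0
  have hB₁n : ‖s - z₁‖ ≤ ‖B₁‖ := by rw [← norm_sub_rev z₁ s]; exact hrB₁
  have hB₂n : ‖s - z₂‖ ≤ ‖B₂‖ := by rw [← norm_sub_rev z₂ s]; exact hrB₂
  have hB₁0 : B₁ ≠ 0 := by
    rw [← norm_pos_iff]; exact lt_of_lt_of_le hsz₁ hB₁n
  have hB₂0 : B₂ ≠ 0 := by
    rw [← norm_pos_iff]; exact lt_of_lt_of_le hsz₂ hB₂n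
  have eA : 1/A₁ - 1/A₂ = (A₂ - A₁)/(A₁*A₂) := by
    rw [div_sub_div _ _ hA₁0 hA₂0, one_mul, mul_one]
  have eB : 1/B₁ - 1/B₂ = (B₂ - B₁)/(B₁*B₂) := by
    rw [div_sub_div _ _ hB₁0 hB₂0, one_mul, mul_one]
  have hAdiff : A₂ - A₁ = starRingEnd ℂ (z₂ - z₁) := by
    rw [hA₁, hA₂, map_sub]; ring
  have hBdiff : B₂ - B₁ = starRingEnd ℂ (z₂ - z₁) := by
    rw [hB₁, hB₂, map_sub]; ring
  have nA : ‖(A₂ - A₁)/(A₁*A₂)‖ = ‖z₁ - z₂‖ * (‖s - z₁‖ * ‖s - z₂‖)⁻¹ := by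
    rw [norm_div, norm_mul, hAdiff, RCLike.norm_conj, norm_sub_rev, hnA₁, hnA₂, div_eq_mul_inv]
  have nB : ‖(B₂ - B₁)/(B₁*B₂)‖ ≤ ‖z₁ - z₂‖ * (‖s - z₁‖ * ‖s - z₂‖)⁻¹ := by
    rw [norm_div, norm_mul, hBdiff, RCLike.norm_conj, norm_sub_rev, div_eq_mul_inv]
    have hmul : ‖s - z₁‖ * ‖s - z₂‖ ≤ ‖B₁‖ * ‖B₂‖ :=
      mul_le_mul hB₁n hB₂n (le_of_lt hsz₂) (norm_nonneg _)
    exact mul_le_mul_of_nonneg_left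
      (inv_anti₀ (by positivity) hmul) (norm_nonneg _)
  have rearr : (1/A₁ - 1/B₁) - (1/A₂ - 1/B₂) = (1/A₁ - 1/A₂) - (1/B₁ - 1/B₂) := by ring
  calc ‖(1/A₁ - 1/B₁) - (1/A₂ - 1/B₂)‖
      = ‖(1/A₁ - 1/A₂) - (1/B₁ - 1/B₂)‖ := by rw [rearr]
    _ ≤ ‖1/A₁ - 1/A₂‖ + ‖1/B₁ - 1/B₂‖ := norm_sub_le _ _
    _ ≤ ‖z₁ - z₂‖ * (‖s - z₁‖ * ‖s - z₂‖)⁻¹ + ‖z₁ - z₂‖ * (‖s - z₁‖ * ‖s - z₂‖)⁻¹ := by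
        rw [eA, eB]
        exact add_le_add (le_of_eq nA) nB
    _ = 2 * ‖z₁ - z₂‖ * (‖s - z₁‖ * ‖s - z₂‖)⁻¹ := by ring

lemma kernel_bound (y s : ℂ) (hy : ‖y‖ ≤ 1) (hs : ‖s‖ < 1)
    (hs0 : s ≠ 0) (hsy : s ≠ y) :
    ‖1 / (starRingEnd ℂ y - starRingEnd ℂ s) - 1 / (starRingEnd ℂ y - 1 / s)‖
      ≤ 2 * ‖s - y‖⁻¹ := by
  have hsz : (0:ℝ) < ‖s - y‖ := by rw [norm_pos_iff, sub_ne_zero]; exact hsy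
  have hA : ‖starRingEnd ℂ y - starRingEnd ℂ s‖ = ‖s - y‖ := conj_sub_norm y s
  have hB : ‖s - y‖ ≤ ‖starRingEnd ℂ y - 1/s‖ := by
    rw [← norm_sub_rev y s]; exact reflect_ge y s hy hs hs0
  calc ‖1 / (starRingEnd ℂ y - starRingEnd ℂ s) - 1 / (starRingEnd ℂ y - 1 / s)‖
      ≤ ‖1 / (starRingEnd ℂ y - starRingEnd ℂ s)‖ + ‖1 / (starRingEnd ℂ y - 1 / s)‖ :=
        norm_sub_le _ _
    _ ≤ ‖s - y‖⁻¹ + ‖s - y‖⁻¹ := by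
        apply add_le_add
        · rw [norm_div, norm_one, hA, one_div]
        · rw [norm_div, norm_one, one_div]
          exact inv_anti₀ hsz hB
    _ = 2 * ‖s - y‖⁻¹ := by ring

lemma hDball : {z : ℂ | ‖z‖ < 1} = Metric.ball (0:ℂ) 1 := by
  ext z; simp [Metric.mem_ball, Complex.dist_eq]

lemma hDmeas : MeasurableSet {z : ℂ | ‖z‖ < 1} := by
  rw [hDball]; exact measurableSet_ball

lemma measK (y : ℂ) : Measurable (fun s : ℂ =>
    1 / (starRingEnd ℂ y - starRingEnd ℂ s) - 1 / (starRingEnd ℂ y - 1 / s)) := by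
  have hconj : Measurable (fun s : ℂ => starRingEnd ℂ s) := Complex.continuous_conj.measurable
  fun_prop

lemma integrable_inv_dist (y : ℂ) (ρ : ℝ) :
    IntegrableOn (fun s : ℂ => ‖s - y‖⁻¹) (Metric.ball y ρ) volume := by
  constructor
  · exact (((measurable_id.sub_const y).norm).inv).aestronglyMeasurable
  · rw [hasFiniteIntegral_iff_norm]
    have : ∀ s : ℂ, ENNReal.ofReal ‖‖s - y‖⁻¹‖ = ENNReal.ofReal ‖s - y‖⁻¹ := by
      intro s; rw [norm_inv, norm_norm]
    simp_rw [this]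
    rcases le_or_gt 0 ρ with hρ | hρ
    · rw [P1 y ρ hρ]; exact ENNReal.ofReal_lt_top
    · rw [Metric.ball_eq_empty.mpr hρ.le]
      simp

lemma integrandAESM (Psi' : ℂ → ℂ) (w : ℂ → ℝ)
    (hdiff : DifferentiableOn ℂ Psi' {z : ℂ | ‖z‖ < 1})
    (hw : Measurable w) (y : ℂ) :
    AEStronglyMeasurable (fun s : ℂ =>
      (1 / (starRingEnd ℂ y - starRingEnd ℂ s) - 1 / (starRingEnd ℂ y - 1 / s))
        * (w s : ℂ) * ((‖Psi' s‖)^2 : ℝ))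
      (volume.restrict {z : ℂ | ‖z‖ < 1}) := by
  have hKm : AEMeasurable (fun s : ℂ =>
      1 / (starRingEnd ℂ y - starRingEnd ℂ s) - 1 / (starRingEnd ℂ y - 1 / s))
      (volume.restrict {z : ℂ | ‖z‖ < 1}) := (measK y).aemeasurable
  have hwm : AEMeasurable (fun s : ℂ => (w s : ℂ))
      (volume.restrict {z : ℂ | ‖z‖ < 1}) :=
    (Complex.measurable_ofReal.comp hw).aemeasurable
  have hPm : AEMeasurable (fun s : ℂ => (((‖Psi' s‖)^2 : ℝ) : ℂ))
      (volume.restrict {z : ℂ | ‖z‖ < 1}) := by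
    have hc : ContinuousOn (fun s : ℂ => (((‖Psi' s‖)^2 : ℝ) : ℂ))
        {z : ℂ | ‖z‖ < 1} := by
      apply Complex.continuous_ofReal.comp_continuousOn
      exact (continuous_norm.comp_continuousOn hdiff.continuousOn).pow 2
    exact hc.aemeasurable hDmeas
  exact ((hKm.mul hwm).mul hPm).aestronglyMeasurable

lemma integrandIntegrable (Psi' : ℂ → ℂ) (w : ℂ → ℝ) (C₁ C₂ : ℝ)
    (hC₁ : 0 < C₁) (hC₂ : 0 < C₂)
    (hdiff : DifferentiableOn ℂ Psi' {z : ℂ | ‖z‖ < 1})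
    (hP : ∀ z, ‖z‖ < 1 → ‖Psi' z‖ ≤ C₁)
    (hw : Measurable w) (hwb : ∀ z, |w z| ≤ C₂)
    (y : ℂ) (hy : ‖y‖ ≤ 1) :
    IntegrableOn (fun s : ℂ =>
      (1 / (starRingEnd ℂ y - starRingEnd ℂ s) - 1 / (starRingEnd ℂ y - 1 / s))
        * (w s : ℂ) * ((‖Psi' s‖)^2 : ℝ))
      {z : ℂ | ‖z‖ < 1} volume := by
  set D := {z : ℂ | ‖z‖ < 1} with hD
  have hg0 : IntegrableOn (fun s : ℂ => (2 * (C₁^2 * C₂)) * ‖s - y‖⁻¹) D volume := by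
    have hsub : D ⊆ Metric.ball y 2 := by
      intro s hs
      have hs1 : ‖s‖ < 1 := hs
      have hy1 : ‖y‖ ≤ 1 := hy
      rw [Metric.mem_ball, dist_eq_norm]
      calc ‖s - y‖ ≤ ‖s‖ + ‖y‖ := norm_sub_le _ _
      _ < 2 := by linarith
    exact IntegrableOn.mono_set ((integrable_inv_dist y 2).const_mul _) hsub
  refine Integrable.mono' hg0 (integrandAESM Psi' w hdiff hw y) ?_
  have hnull : (volume : Measure ℂ) {0, y} = 0 :=
    ((Set.finite_singleton y).insert 0).countable.measure_zero _
  filter_upwards [ae_restrict_mem hDmeas,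
    ae_restrict_of_ae (measure_eq_zero_iff_ae_notMem.mp hnull)] with s hsD hsN
  have hs0 : s ≠ 0 := fun h => hsN (by rw [h]; exact Set.mem_insert _ _)
  have hsy : s ≠ y := fun h => hsN (by rw [h]; exact Set.mem_insert_of_mem _ rfl)
  have hsmem : ‖s‖ < 1 := hsD
  rw [norm_mul, norm_mul]
  have h1 : ‖1 / (starRingEnd ℂ y - starRingEnd ℂ s) - 1 / (starRingEnd ℂ y - 1 / s)‖
      ≤ 2 * ‖s - y‖⁻¹ := kernel_bound y s hy hsmem hs0 hsy
  have h2 : ‖(w s : ℂ)‖ ≤ C₂ := by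
    rw [Complex.norm_real]; exact hwb s
  have h3 : ‖((((‖Psi' s‖)^2 : ℝ)) : ℂ)‖ ≤ C₁^2 := by
    rw [Complex.norm_real, Real.norm_eq_abs, abs_of_nonneg (by positivity)]
    have := hP s hsmem
    nlinarith [norm_nonneg (Psi' s)]
  calc ‖1 / (starRingEnd ℂ y - starRingEnd ℂ s) - 1 / (starRingEnd ℂ y - 1 / s)‖
        * ‖(w s : ℂ)‖ * ‖((((‖Psi' s‖)^2 : ℝ)) : ℂ)‖
      ≤ (2 * ‖s - y‖⁻¹) * C₂ * C₁^2 := by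
        have hn1 : (0:ℝ) ≤ ‖(w s : ℂ)‖ := norm_nonneg _
        have hn2 : (0:ℝ) ≤ ‖((((‖Psi' s‖)^2 : ℝ)) : ℂ)‖ := norm_nonneg _
        apply mul_le_mul _ h3 hn2 (by positivity)
        exact mul_le_mul h1 h2 hn1 (by positivity)
    _ = (2 * (C₁^2 * C₂)) * ‖s - y‖⁻¹ := by ring

theorem btil_logLipschitz (C₁ C₂ : ℝ) (hC₁ : 0 < C₁) (hC₂ : 0 < C₂) :
    ∃ C : ℝ, 0 < C ∧ ∀ (Psi' : ℂ → ℂ) (w : ℂ → ℝ),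
      DifferentiableOn ℂ Psi' {z : ℂ | ‖z‖ < 1} →
      (∀ z, ‖z‖ < 1 → ‖Psi' z‖ ≤ C₁) →
      Measurable w → (∀ z, |w z| ≤ C₂) →
      ∀ z₁ z₂ : ℂ, ‖z₁‖ ≤ 1 → ‖z₂‖ ≤ 1 →
        ‖btil Psi' w z₁ - btil Psi' w z₂‖ ≤ C * phi (‖z₁ - z₂‖) := by
  refine ⟨120 * C₁^2 * C₂, by positivity, ?_⟩
  intro Psi' w hdiff hP hw hwb z₁ z₂ hz₁ hz₂
  by_cases hzz : z₁ = z₂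
  · subst hzz
    simp [phi]
  set f : ℂ → ℂ → ℂ := fun y s =>
    (1 / (starRingEnd ℂ y - starRingEnd ℂ s) - 1 / (starRingEnd ℂ y - 1 / s))
      * (w s : ℂ) * ((‖Psi' s‖)^2 : ℝ) with hf
  have hint1 : IntegrableOn (f z₁) {z : ℂ | ‖z‖ < 1} volume :=
    integrandIntegrable Psi' w C₁ C₂ hC₁ hC₂ hdiff hP hw hwb z₁ hz₁
  have hint2 : IntegrableOn (f z₂) {z : ℂ | ‖z‖ < 1} volume :=
    integrandIntegrable Psi' w C₁ C₂ hC₁ hC₂ hdiff hP hw hwb z₂ hz₂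
  have hbtil : btil Psi' w z₁ - btil Psi' w z₂
      = (Complex.I / (2 * Real.pi)) *
          ∫ s in {z : ℂ | ‖z‖ < 1}, (f z₁ s - f z₂ s) ∂volume := by
    rw [btil, btil, ← mul_sub, ← integral_sub hint1 hint2]
  set d : ℝ := ‖z₁ - z₂‖ with hd
  have hd0 : 0 < d := by
    rw [hd]
    exact norm_pos_iff.mpr (sub_ne_zero.mpr hzz)
  set M : ℝ := max (-Real.log d) 1 with hM
  have hM1 : (1:ℝ) ≤ M := le_max_right _ _
  have hphi : phi (‖z₁ - z₂‖) = d * M := by rw [phi, ← hd, ← hM]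
  have hphi0 : 0 ≤ phi (‖z₁ - z₂‖) := by
    rw [hphi]; nlinarith
  have habsc : ‖Complex.I / (2 * Real.pi)‖ ≤ 1 := by
    rw [norm_div, Complex.norm_I, norm_mul, Complex.norm_two, Complex.norm_real, Real.norm_eq_abs,
      abs_of_pos Real.pi_pos]
    rw [div_le_one (by positivity)]
    nlinarith [Real.pi_gt_three]
  -- pointwise ae bound
  have hnull : (volume : Measure ℂ) {0, z₁, z₂} = 0 :=
    (((Set.finite_singleton z₂).insert z₁).insert 0).countable.measure_zero _
  have hae : ∀ᵐ s ∂(volume.restrict {z : ℂ | ‖z‖ < 1}),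
      ENNReal.ofReal ‖f z₁ s - f z₂ s‖
        ≤ ENNReal.ofReal (2 * (C₁^2 * C₂) * d) * ENNReal.ofReal ((‖s - z₁‖ * ‖s - z₂‖)⁻¹) := by
    filter_upwards [ae_restrict_mem hDmeas,
      ae_restrict_of_ae (measure_eq_zero_iff_ae_notMem.mp hnull)] with s hsD hsN
    have hs0 : s ≠ 0 := fun h => hsN (by rw [h]; exact Set.mem_insert _ _)
    have hs1 : s ≠ z₁ := fun h => hsN (by rw [h]; exact Set.mem_insert_of_mem _ (Set.mem_insert _ _))
    have hs2 : s ≠ z₂ := fun h => hsN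
      (by rw [h]; exact Set.mem_insert_of_mem _ (Set.mem_insert_of_mem _ rfl))
    have hsmem : ‖s‖ < 1 := hsD
    rw [← ENNReal.ofReal_mul (by positivity)]
    refine ENNReal.ofReal_le_ofReal ?_
    have hfactor : f z₁ s - f z₂ s =
        ((1 / (starRingEnd ℂ z₁ - starRingEnd ℂ s) - 1 / (starRingEnd ℂ z₁ - 1 / s))
          - (1 / (starRingEnd ℂ z₂ - starRingEnd ℂ s) - 1 / (starRingEnd ℂ z₂ - 1 / s)))
          * (w s : ℂ) * ((‖Psi' s‖)^2 : ℝ) := by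
      rw [hf]; ring
    rw [hfactor, norm_mul, norm_mul]
    have h1 := kernel_diff_bound z₁ z₂ s hz₁ hz₂ hsmem hs0 hs1 hs2
    have h2 : ‖(w s : ℂ)‖ ≤ C₂ := by rw [Complex.norm_real]; exact hwb s
    have h3 : ‖((((‖Psi' s‖)^2 : ℝ)) : ℂ)‖ ≤ C₁^2 := by
      rw [Complex.norm_real, Real.norm_eq_abs, abs_of_nonneg (by positivity)]
      have := hP s hsmem
      nlinarith [norm_nonneg (Psi' s)]
    have hdn : ‖z₁ - z₂‖ = d := by rw [hd]
    calc ‖(1 / (starRingEnd ℂ z₁ - starRingEnd ℂ s) - 1 / (starRingEnd ℂ z₁ - 1 / s))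
          - (1 / (starRingEnd ℂ z₂ - starRingEnd ℂ s) - 1 / (starRingEnd ℂ z₂ - 1 / s))‖
          * ‖(w s : ℂ)‖ * ‖((((‖Psi' s‖)^2 : ℝ)) : ℂ)‖
        ≤ (2 * ‖z₁ - z₂‖ * (‖s - z₁‖ * ‖s - z₂‖)⁻¹) * C₂ * C₁^2 := by
          apply mul_le_mul _ h3 (norm_nonneg _) (by positivity)
          exact mul_le_mul h1 h2 (norm_nonneg _) (by positivity)
      _ = 2 * (C₁^2 * C₂) * d * (‖s - z₁‖ * ‖s - z₂‖)⁻¹ := by rw [hdn]; ring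
  have hkey : ∫⁻ s in {z : ℂ | ‖z‖ < 1}, ENNReal.ofReal ‖f z₁ s - f z₂ s‖ ∂volume
      ≤ ENNReal.ofReal (120 * C₁^2 * C₂ * phi (‖z₁ - z₂‖)) := by
    calc ∫⁻ s in {z : ℂ | ‖z‖ < 1}, ENNReal.ofReal ‖f z₁ s - f z₂ s‖ ∂volume
        ≤ ∫⁻ s in {z : ℂ | ‖z‖ < 1},
            ENNReal.ofReal (2 * (C₁^2 * C₂) * d) * ENNReal.ofReal ((‖s - z₁‖ * ‖s - z₂‖)⁻¹) ∂volume :=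
          lintegral_mono_ae hae
      _ = ENNReal.ofReal (2 * (C₁^2 * C₂) * d) *
            ∫⁻ s in {z : ℂ | ‖z‖ < 1}, ENNReal.ofReal ((‖s - z₁‖ * ‖s - z₂‖)⁻¹) ∂volume :=
          lintegral_const_mul' _ _ ENNReal.ofReal_ne_top
      _ ≤ ENNReal.ofReal (2 * (C₁^2 * C₂) * d) * ENNReal.ofReal (60 * max (-Real.log ‖z₁ - z₂‖) 1) := by
          exact mul_le_mul_right (keyJ z₁ z₂ hz₁ hz₂ hzz) _
      _ ≤ ENNReal.ofReal (120 * C₁^2 * C₂ * phi (‖z₁ - z₂‖)) := by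
          rw [← ENNReal.ofReal_mul (by positivity)]
          refine ENNReal.ofReal_le_ofReal ?_
          have hdn : ‖z₁ - z₂‖ = d := by rw [hd]
          rw [hdn, hphi, ← hM]
          nlinarith [hd0.le, hM1]
  calc ‖btil Psi' w z₁ - btil Psi' w z₂‖
      = ‖Complex.I / (2 * Real.pi)‖ *
          ‖∫ s in {z : ℂ | ‖z‖ < 1}, (f z₁ s - f z₂ s) ∂volume‖ := by
        rw [hbtil, norm_mul]
    _ ≤ 1 * ‖∫ s in {z : ℂ | ‖z‖ < 1}, (f z₁ s - f z₂ s) ∂volume‖ := by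
        exact mul_le_mul_of_nonneg_right habsc (norm_nonneg _)
    _ = ‖∫ s in {z : ℂ | ‖z‖ < 1}, (f z₁ s - f z₂ s) ∂volume‖ := one_mul _
    _ ≤ (∫⁻ s in {z : ℂ | ‖z‖ < 1}, ENNReal.ofReal ‖f z₁ s - f z₂ s‖ ∂volume).toReal :=
        norm_integral_le_lintegral_norm _
    _ ≤ 120 * C₁^2 * C₂ * phi (‖z₁ - z₂‖) :=
        ENNReal.toReal_le_of_le_ofReal (by positivity) hkey
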